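/- Let 0 < a < b and n an integer with |n| ≥ 2, p ∈ (0,1), and let M be an upper bound for |n·xⁿ⁻¹| on [a,b]. Then |((a+b)/2)ⁿ - (bⁿ⁺¹ - aⁿ⁺¹)/((n+1)(b-a))| ≤ (M(b-a)/4)·[∫₀¹ (1+t²)^{p-1} dt + ∫₀¹ (1+t-t²)^{p-1} dt]. -/

import Mathlib

open intervalIntegral MeasureTheory

theorem means_inequality_h_convex
    (a b : ℝ) (ha : 0 < a) (hab : a < b)
    (n : ℤ) (hn : 2 ≤ |n|) (p : ℝ) (hp : p ∈ Set.Ioo (0:ℝ) 1)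
    (M : ℝ) (hM : ∀ x ∈ Set.Icc a b, |(n : ℝ) * x ^ (n - 1)| ≤ M) :
    |((a + b) / 2) ^ n - (b ^ (n + 1) - a ^ (n + 1)) / ((n + 1) * (b - a))| ≤
      (M * (b - a) / 4) *
        ((∫ t in (0:ℝ)..1, (1 + t ^ 2) ^ (p - 1)) +
         (∫ t in (0:ℝ)..1, (1 + t - t ^ 2) ^ (p - 1))) := by
  set m : ℝ := (a + b) / 2 with hm_def
  have hab' : a ≤ b := hab.le
  have ham : a ≤ m := by simp [hm_def]; linarith
  have hmb : m ≤ b := by simp [hm_def]; linarith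
  have hm_mem : m ∈ Set.Icc a b := ⟨ham, hmb⟩
  have hM0 : 0 ≤ M := le_trans (abs_nonneg _) (hM a ⟨le_refl a, hab'⟩)
  have hn1 : n ≠ -1 := by
    intro h; rw [h] at hn; norm_num at hn
  have hn1R : ((n : ℝ) + 1) ≠ 0 := by
    intro h
    have : (n : ℝ) = -1 := by linarith
    exact hn1 (by exact_mod_cast this)
  -- positivity on the interval
  have hpos : ∀ x ∈ Set.Icc a b, (0:ℝ) < x := fun x hx => lt_of_lt_of_le ha hx.1
  -- Lipschitz bound via mean value theorem
  have hlip : ∀ x ∈ Set.Icc a b, |m ^ n - x ^ n| ≤ M * |m - x| := by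
    intro x hx
    have := Convex.norm_image_sub_le_of_norm_hasDerivWithin_le
      (f := fun y : ℝ => y ^ n) (f' := fun y : ℝ => (n : ℝ) * y ^ (n - 1))
      (s := Set.Icc a b) (C := M)
      (fun y hy => (hasDerivAt_zpow n y (Or.inl (hpos y hy).ne')).hasDerivWithinAt)
      (fun y hy => by simpa only [Real.norm_eq_abs] using hM y hy)
      (convex_Icc a b) hx hm_mem
    simpa [Real.norm_eq_abs] using this
  -- continuity / integrability
  have hcont : ContinuousOn (fun x : ℝ => x ^ n) (Set.Icc a b) := fun x hx =>
    (continuousAt_zpow₀ x n (Or.inl (hpos x hx).ne')).continuousWithinAt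
  have hint_f : IntervalIntegrable (fun x : ℝ => x ^ n) volume a b := by
    apply ContinuousOn.intervalIntegrable
    rwa [Set.uIcc_of_le hab']
  have hint_diff : IntervalIntegrable (fun x : ℝ => |m ^ n - x ^ n|) volume a b := by
    apply ContinuousOn.intervalIntegrable
    rw [Set.uIcc_of_le hab']
    exact ((continuousOn_const.sub hcont).abs)
  have hint_g : IntervalIntegrable (fun x : ℝ => M * |m - x|) volume a b :=
    (continuous_const.mul (continuous_const.sub continuous_id).abs).intervalIntegrable a b
  -- value of the integral of x^n
  have hI : (∫ x in a..b, x ^ n) = (b ^ (n + 1) - a ^ (n + 1)) / ((n : ℝ) + 1) := by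
    have h0 : (0:ℝ) ∉ Set.uIcc a b := by
      rw [Set.uIcc_of_le hab']
      intro h; exact absurd (hpos 0 h) (lt_irrefl 0)
    rw [integral_zpow (Or.inr ⟨hn1, h0⟩)]
  -- integral of |m - x|
  have habs1 : (∫ x in a..m, |m - x|) = (m - a) ^ 2 / 2 := by
    have : (∫ x in a..m, |m - x|) = ∫ x in a..m, (m - x) := by
      apply integral_congr
      intro x hx
      rw [Set.uIcc_of_le ham] at hx
      exact abs_of_nonneg (by linarith [hx.2])
    rw [this, integral_sub intervalIntegrable_const intervalIntegral.intervalIntegrable_id,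
      intervalIntegral.integral_const, integral_id]
    simp only [smul_eq_mul]; ring
  have habs2 : (∫ x in m..b, |m - x|) = (b - m) ^ 2 / 2 := by
    have : (∫ x in m..b, |m - x|) = ∫ x in m..b, (x - m) := by
      apply integral_congr
      intro x hx
      rw [Set.uIcc_of_le hmb] at hx
      show |m - x| = x - m
      rw [abs_sub_comm]
      exact abs_of_nonneg (by linarith [hx.1])
    rw [this, integral_sub intervalIntegral.intervalIntegrable_id intervalIntegrable_const,
      intervalIntegral.integral_const, integral_id]
    simp only [smul_eq_mul]; ring
  have habs : (∫ x in a..b, M * |m - x|) = M * (b - a) ^ 2 / 4 := by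
    rw [intervalIntegral.integral_const_mul]
    have hsplit : (∫ x in a..m, |m - x|) + (∫ x in m..b, |m - x|)
        = ∫ x in a..b, |m - x| := by
      apply integral_add_adjacent_intervals <;>
        exact (continuous_const.sub continuous_id).abs.intervalIntegrable _ _
    rw [← hsplit, habs1, habs2]
    have : m - a = (b - a) / 2 := by rw [hm_def]; ring
    have h2 : b - m = (b - a) / 2 := by rw [hm_def]; ring
    rw [this, h2]; ring
  -- main Ostrowski-type estimate
  have key : |m ^ n - (b ^ (n + 1) - a ^ (n + 1)) / ((n + 1) * (b - a))| ≤ M * (b - a) / 4 := by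
    have hba : (0:ℝ) < b - a := by linarith
    have hrewrite : m ^ n - (b ^ (n + 1) - a ^ (n + 1)) / ((n + 1) * (b - a))
        = (∫ x in a..b, (m ^ n - x ^ n)) / (b - a) := by
      rw [integral_sub intervalIntegrable_const hint_f, intervalIntegral.integral_const, hI]
      rw [smul_eq_mul]
      push_cast
      field_simp
    rw [hrewrite, abs_div, abs_of_pos hba, div_le_iff₀ hba]
    calc |∫ x in a..b, (m ^ n - x ^ n)| ≤ ∫ x in a..b, |m ^ n - x ^ n| :=
          abs_integral_le_integral_abs hab'
      _ ≤ ∫ x in a..b, M * |m - x| := by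
          apply integral_mono_on hab' hint_diff hint_g
          intro x hx
          simpa [abs_sub_comm] using hlip x hx
      _ = M * (b - a) ^ 2 / 4 := habs
      _ = M * (b - a) / 4 * (b - a) := by ring
  -- lower bound for the two integrals
  have h2p : (1:ℝ) / 2 ≤ (2:ℝ) ^ (p - 1) := by
    have : (2:ℝ) ^ (-1:ℝ) ≤ (2:ℝ) ^ (p - 1) :=
      Real.rpow_le_rpow_of_exponent_le (by norm_num) (by linarith [hp.1])
    rwa [Real.rpow_neg_one, inv_eq_one_div] at this
  have hi1 : (1:ℝ) / 2 ≤ ∫ t in (0:ℝ)..1, (1 + t ^ 2) ^ (p - 1) := by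
    have hc : IntervalIntegrable (fun t : ℝ => (1 + t ^ 2) ^ (p - 1)) volume 0 1 := by
      apply Continuous.intervalIntegrable
      exact (continuous_const.add (continuous_pow 2)).rpow_const (fun x => Or.inl (by show (1:ℝ) + x ^ 2 ≠ 0; positivity))
    have := integral_mono_on (f := fun _ : ℝ => (2:ℝ) ^ (p - 1))
      (g := fun t : ℝ => (1 + t ^ 2) ^ (p - 1)) (by norm_num : (0:ℝ) ≤ 1)
      intervalIntegrable_const hc
      (fun x hx => Real.rpow_le_rpow_of_nonpos (by positivity) (by nlinarith [hx.1, hx.2])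
        (by linarith [hp.2]))
    simp only [intervalIntegral.integral_const, smul_eq_mul, sub_zero, one_mul] at this
    linarith
  have hi2 : (1:ℝ) / 2 ≤ ∫ t in (0:ℝ)..1, (1 + t - t ^ 2) ^ (p - 1) := by
    have hc : IntervalIntegrable (fun t : ℝ => (1 + t - t ^ 2) ^ (p - 1)) volume 0 1 := by
      apply ContinuousOn.intervalIntegrable
      apply ContinuousOn.rpow_const (by fun_prop)
      intro x hx
      rw [Set.uIcc_of_le (by norm_num : (0:ℝ) ≤ 1)] at hx
      left; nlinarith [hx.1, hx.2]
    have := integral_mono_on (f := fun _ : ℝ => (2:ℝ) ^ (p - 1))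
      (g := fun t : ℝ => (1 + t - t ^ 2) ^ (p - 1)) (by norm_num : (0:ℝ) ≤ 1)
      intervalIntegrable_const hc
      (fun x hx => Real.rpow_le_rpow_of_nonpos (by nlinarith [hx.1, hx.2])
        (by nlinarith [hx.1, hx.2]) (by linarith [hp.2]))
    simp only [intervalIntegral.integral_const, smul_eq_mul, sub_zero, one_mul] at this
    linarith
  have hfac : (0:ℝ) ≤ M * (b - a) / 4 := by
    have : (0:ℝ) ≤ b - a := by linarith
    positivity
  calc |m ^ n - (b ^ (n + 1) - a ^ (n + 1)) / ((n + 1) * (b - a))|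
      ≤ M * (b - a) / 4 := key
    _ = M * (b - a) / 4 * 1 := by ring
    _ ≤ M * (b - a) / 4 *
        ((∫ t in (0:ℝ)..1, (1 + t ^ 2) ^ (p - 1)) +
         (∫ t in (0:ℝ)..1, (1 + t - t ^ 2) ^ (p - 1))) := by
        apply mul_le_mul_of_nonneg_left _ hfac
        linarith
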